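/- Let φ : ℝ → ℝ be continuous, let k1, k2, k3, k4 be pairwise distinct integers, let v = (v1, v2, v3, v4) ∈ ℝ⁴ with v1 ≠ 0, and let s ∈ ℝ. Suppose there are nonempty open intervals I, J ⊆ ℝ such that Σ_{j=1}^{4} v_j·φ(x + k_j·y) = s for all (x, y) ∈ I × J. Then there exists a nonempty open interval on which φ coincides with a polynomial of degree at most 2. -/

import Mathlib

open Set
set_option maxHeartbeats 2000000

def comb (f : ℝ → ℝ) (L : List (ℝ × ℝ)) (t : ℝ) : ℝ :=
  (L.map (fun p => p.1 * f (t + p.2))).sum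

def combM (f : ℝ → ℝ) (L : List (ℝ × ℝ)) (t : ℝ) (ε : ℝ) : ℝ :=
  (L.map (fun p => p.1 * f (t + p.2 * ε))).sum

lemma comb_hasDerivAt {f f' : ℝ → ℝ} (hf : ∀ x, HasDerivAt f (f' x) x)
    (L : List (ℝ × ℝ)) (t : ℝ) : HasDerivAt (comb f L) (comb f' L t) t := by
  induction L with
  | nil => exact hasDerivAt_const t (0:ℝ)
  | cons p L ih =>
    have h1 : HasDerivAt (fun u => f (u + p.2)) (f' (t + p.2)) t := by
      exact ((hf (t + p.2)).comp t ((hasDerivAt_id t).add_const p.2)).congr_deriv (by ring)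
    have := (h1.const_mul p.1).add ih
    exact this

lemma comb_continuous {f : ℝ → ℝ} (hf : Continuous f) (L : List (ℝ × ℝ)) :
    Continuous (comb f L) := by
  induction L with
  | nil => exact continuous_const
  | cons p L ih =>
    exact (continuous_const.mul (hf.comp (continuous_id.add continuous_const))).add ih

lemma combM_hasDerivAt {f f' : ℝ → ℝ} (hf : ∀ x, HasDerivAt f (f' x) x)
    (L : List (ℝ × ℝ)) (t ε : ℝ) :
    HasDerivAt (combM f L t) (combM f' (L.map fun p => (p.1 * p.2, p.2)) t ε) ε := by
  induction L with
  | nil => exact hasDerivAt_const ε (0:ℝ)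
  | cons p L ih =>
    have h0 : HasDerivAt (fun u : ℝ => t + p.2 * u) p.2 ε := by
      simpa using ((hasDerivAt_id ε).const_mul p.2).const_add t
    have h1 : HasDerivAt (fun u => f (t + p.2 * u)) (f' (t + p.2 * ε) * p.2) ε :=
      (hf (t + p.2 * ε)).comp ε h0
    have := (h1.const_mul p.1).add ih
    have e : p.1 * (f' (t + p.2 * ε) * p.2) = p.1 * p.2 * f' (t + p.2 * ε) := by ring
    rw [e] at this
    exact this

lemma combM_continuous {f : ℝ → ℝ} (hf : Continuous f) (L : List (ℝ × ℝ)) (t : ℝ) :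
    Continuous (combM f L t) := by
  induction L with
  | nil => exact continuous_const
  | cons p L ih =>
    exact (continuous_const.mul (hf.comp (continuous_const.add (continuous_const.mul continuous_id)))).add ih

lemma const_on_Ioo {F F' : ℝ → ℝ} (h : ∀ x, HasDerivAt F (F' x) x)
    {c d : ℝ} (hz : ∀ t ∈ Ioo c d, F' t = 0) :
    ∀ t ∈ Ioo c d, ∀ t' ∈ Ioo c d, F t = F t' := by
  have key : ∀ u ∈ Ioo c d, ∀ w ∈ Ioo c d, u ≤ w → F w = F u := by
    intro u hu w hw huw
    have := constant_of_has_deriv_right_zero (a := u) (b := w)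
      (f := F) (fun x _ => (h x).continuousAt.continuousWithinAt) ?_ w ?_
    · exact this
    · intro x hx
      have hxm : x ∈ Ioo c d := ⟨lt_of_lt_of_le hu.1 hx.1, lt_trans hx.2 hw.2⟩
      have := (h x).hasDerivWithinAt (s := Ici x)
      rwa [hz x hxm] at this
    · exact ⟨huw, le_refl w⟩
  intro t ht t' ht'
  rcases le_total t t' with hle | hle
  · exact (key t ht t' ht' hle).symm
  · exact key t' ht' t ht hle

lemma const_on_Ico {F F' : ℝ → ℝ} (h : ∀ x, HasDerivAt F (F' x) x) {b1 : ℝ}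
    (hz : ∀ u ∈ Ico 0 b1, F' u = 0) : ∀ b ∈ Ioo 0 b1, F b = F 0 := by
  intro b hb
  have := constant_of_has_deriv_right_zero (a := 0) (b := b) (f := F)
    (fun x _ => (h x).continuousAt.continuousWithinAt)
    (fun x hx => by
      have hz' := hz x ⟨hx.1, lt_trans hx.2 hb.2⟩
      have h2 := (h x).hasDerivWithinAt (s := Ici x)
      rwa [hz'] at h2)
  exact this b ⟨hb.1.le, le_refl b⟩

lemma quad_of_deriv3_zero (F F1 F2 F3 : ℝ → ℝ)
    (h1 : ∀ x, HasDerivAt F (F1 x) x) (h2 : ∀ x, HasDerivAt F1 (F2 x) x)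
    (h3 : ∀ x, HasDerivAt F2 (F3 x) x) {c d : ℝ} (hcd : c < d)
    (hz : ∀ t ∈ Ioo c d, F3 t = 0) :
    ∃ a b e : ℝ, ∀ t ∈ Ioo c d, F t = a * t ^ 2 + b * t + e := by
  set t0 := (c + d) / 2 with ht0
  have ht0m : t0 ∈ Ioo c d := ⟨by simp [ht0]; linarith, by simp [ht0]; linarith⟩
  have hF2 : ∀ t ∈ Ioo c d, F2 t = F2 t0 := fun t ht => const_on_Ioo h3 hz t ht t0 ht0m
  set A := F2 t0 with hA
  have h2' : ∀ x, HasDerivAt (fun u => F1 u - A * u) (F2 x - A) x := by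
    intro x
    exact ((h2 x).sub ((hasDerivAt_id x).const_mul A)).congr_deriv (by ring)
  have hF1 : ∀ t ∈ Ioo c d, F1 t - A * t = F1 t0 - A * t0 := by
    intro t ht
    exact const_on_Ioo h2' (fun u hu => by rw [hF2 u hu]; ring) t ht t0 ht0m
  set B := F1 t0 - A * t0 with hB
  have h1' : ∀ x, HasDerivAt (fun u => F u - (A / 2 * u ^ 2 + B * u)) (F1 x - (A * x + B)) x := by
    intro x
    have hq : HasDerivAt (fun u : ℝ => A / 2 * u ^ 2 + B * u) (A * x + B) x := by
      have := ((hasDerivAt_pow 2 x).const_mul (A / 2)).add ((hasDerivAt_id x).const_mul B)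
      refine this.congr_deriv ?_
      push_cast
      ring
    exact (h1 x).sub hq
  have hF : ∀ t ∈ Ioo c d, F t - (A / 2 * t ^ 2 + B * t) = F t0 - (A / 2 * t0 ^ 2 + B * t0) := by
    intro t ht
    refine const_on_Ioo h1' (fun u hu => ?_) t ht t0 ht0m
    have := hF1 u hu
    linarith
  refine ⟨A / 2, B, F t0 - (A / 2 * t0 ^ 2 + B * t0), fun t ht => ?_⟩
  have := hF t ht
  linarith

lemma deriv_zero_on {F F1 : ℝ → ℝ} (h : ∀ x, HasDerivAt F (F1 x) x)
    {a b : ℝ} (hz : ∀ ε ∈ Ioo a b, F ε = 0) : ∀ ε ∈ Ioo a b, F1 ε = 0 := by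
  intro ε hε
  have hev : (fun _ : ℝ => (0:ℝ)) =ᶠ[nhds ε] F := by
    filter_upwards [isOpen_Ioo.mem_nhds hε] with u hu using (hz u hu).symm
  have h1 : HasDerivAt (fun _ : ℝ => (0:ℝ)) (F1 ε) ε := (h ε).congr_of_eventuallyEq hev
  exact h1.unique (hasDerivAt_const ε 0)

lemma zero_at_zero {F : ℝ → ℝ} (hF : Continuous F) {e : ℝ} (he : 0 < e)
    (hz : ∀ ε ∈ Ioo 0 e, F ε = 0) : F 0 = 0 := by
  have heqon : EqOn F (fun _ => 0) (Ioo 0 e) := fun x hx => hz x hx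
  have hcl : EqOn F (fun _ => 0) (closure (Ioo 0 e)) := heqon.closure hF continuous_const
  have h0 : (0:ℝ) ∈ closure (Ioo 0 e) := by
    rw [closure_Ioo he.ne]
    exact ⟨le_refl 0, he.le⟩
  exact hcl h0

/-- Stage 1: from the 8-term mixed-difference identity derive vanishing
equal-step third differences. -/
lemma stage1 (φ Φ1 Φ2 Φ3 : ℝ → ℝ) (hφ : Continuous φ)
    (hΦ1 : ∀ x, HasDerivAt Φ1 (φ x) x) (hΦ2 : ∀ x, HasDerivAt Φ2 (Φ1 x) x)
    (hΦ3 : ∀ x, HasDerivAt Φ3 (Φ2 x) x)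
    (m1 m2 m3 : ℝ) (hm : m1 * m2 * m3 ≠ 0)
    (c0 d0 ε0 : ℝ) (hε0 : 0 < ε0) (hc0d0 : c0 < d0)
    (Hid : ∀ t ∈ Ioo c0 d0, ∀ ε ∈ Ioo 0 ε0,
      φ t - φ (t + m1 * ε) - φ (t + m2 * ε) - φ (t + m3 * ε)
        + φ (t + (m1 + m2) * ε) + φ (t + (m1 + m3) * ε) + φ (t + (m2 + m3) * ε)
        - φ (t + (m1 + m2 + m3) * ε) = 0) :
    ∀ t η : ℝ, 0 < η → t ∈ Ioo c0 d0 → t + 3 * η < d0 →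
      φ (t + 3 * η) - 3 * φ (t + 2 * η) + 3 * φ (t + η) - φ t = 0 := by
  intro t η hη ht h3η
  have hζ : ∀ ε ∈ Ioo 0 ε0,
      combM (comb Φ3 [((1:ℝ), 3*η), (-3, 2*η), (3, η), (-1, 0)])
        [((1:ℝ),0),(-1,m1),(-1,m2),(-1,m3),(1,m1+m2),(1,m1+m3),(1,m2+m3),(-1,m1+m2+m3)] t ε = 0 := by
    intro ε hε
    have hzero : ∀ u ∈ Ioo c0 d0,
        comb φ [((1:ℝ),0*ε),(-1,m1*ε),(-1,m2*ε),(-1,m3*ε),(1,(m1+m2)*ε),(1,(m1+m3)*ε),(1,(m2+m3)*ε),(-1,(m1+m2+m3)*ε)] u = 0 := by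
      intro u hu
      have h := Hid u hu ε hε
      simp only [comb, List.map_cons, List.map_nil, List.sum_cons, List.sum_nil]
      linear_combination (norm := ring_nf) h
    obtain ⟨a, b, e, hq⟩ := quad_of_deriv3_zero
      (comb Φ3 [((1:ℝ),0*ε),(-1,m1*ε),(-1,m2*ε),(-1,m3*ε),(1,(m1+m2)*ε),(1,(m1+m3)*ε),(1,(m2+m3)*ε),(-1,(m1+m2+m3)*ε)])
      (comb Φ2 [((1:ℝ),0*ε),(-1,m1*ε),(-1,m2*ε),(-1,m3*ε),(1,(m1+m2)*ε),(1,(m1+m3)*ε),(1,(m2+m3)*ε),(-1,(m1+m2+m3)*ε)])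
      (comb Φ1 [((1:ℝ),0*ε),(-1,m1*ε),(-1,m2*ε),(-1,m3*ε),(1,(m1+m2)*ε),(1,(m1+m3)*ε),(1,(m2+m3)*ε),(-1,(m1+m2+m3)*ε)])
      (comb φ [((1:ℝ),0*ε),(-1,m1*ε),(-1,m2*ε),(-1,m3*ε),(1,(m1+m2)*ε),(1,(m1+m3)*ε),(1,(m2+m3)*ε),(-1,(m1+m2+m3)*ε)])
      (comb_hasDerivAt hΦ3 _) (comb_hasDerivAt hΦ2 _) (comb_hasDerivAt hΦ1 _)
      hc0d0 hzero
    have e0 := hq t ht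
    have e1 := hq (t + η) ⟨by linarith [ht.1], by linarith⟩
    have e2 := hq (t + 2*η) ⟨by linarith [ht.1], by linarith⟩
    have e3 := hq (t + 3*η) ⟨by linarith [ht.1], by linarith⟩
    simp only [comb, combM, List.map_cons, List.map_nil, List.sum_cons, List.sum_nil]
      at e0 e1 e2 e3 ⊢
    linear_combination (norm := ring_nf) e3 - 3*e2 + 3*e1 - e0
  have hG1 := deriv_zero_on (fun ε =>
    combM_hasDerivAt (comb_hasDerivAt hΦ3 [((1:ℝ), 3*η), (-3, 2*η), (3, η), (-1, 0)])
      [((1:ℝ),0),(-1,m1),(-1,m2),(-1,m3),(1,m1+m2),(1,m1+m3),(1,m2+m3),(-1,m1+m2+m3)] t ε) hζ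
  have hG2 := deriv_zero_on (fun ε =>
    combM_hasDerivAt (comb_hasDerivAt hΦ2 [((1:ℝ), 3*η), (-3, 2*η), (3, η), (-1, 0)])
      ([((1:ℝ),0),(-1,m1),(-1,m2),(-1,m3),(1,m1+m2),(1,m1+m3),(1,m2+m3),(-1,m1+m2+m3)].map
        (fun p => (p.1 * p.2, p.2))) t ε) hG1
  have hG3 := deriv_zero_on (fun ε =>
    combM_hasDerivAt (comb_hasDerivAt hΦ1 [((1:ℝ), 3*η), (-3, 2*η), (3, η), (-1, 0)])
      (([((1:ℝ),0),(-1,m1),(-1,m2),(-1,m3),(1,m1+m2),(1,m1+m3),(1,m2+m3),(-1,m1+m2+m3)].map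
        (fun p => (p.1 * p.2, p.2))).map (fun p => (p.1 * p.2, p.2))) t ε) hG2
  have h00 := zero_at_zero
    (combM_continuous (comb_continuous hφ [((1:ℝ), 3*η), (-3, 2*η), (3, η), (-1, 0)]) _ t)
    hε0 hG3
  simp only [comb, combM, List.map_cons, List.map_nil, List.sum_cons, List.sum_nil] at h00
  have key : (-6*m1*m2*m3) * (φ (t + 3*η) - 3*φ (t + 2*η) + 3*φ (t + η) - φ t) = 0 := by
    linear_combination (norm := ring_nf) h00
  rcases mul_eq_zero.mp key with h | h
  · exfalso; apply hm; linarith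
  · linarith

/-- Stage 2: vanishing equal-step third differences (with all small steps)
plus continuity gives a quadratic on a subinterval. -/
lemma stage2 (φ Φ1 Φ2 Φ3 : ℝ → ℝ) (hφ : Continuous φ)
    (hΦ1 : ∀ x, HasDerivAt Φ1 (φ x) x) (hΦ2 : ∀ x, HasDerivAt Φ2 (Φ1 x) x)
    (hΦ3 : ∀ x, HasDerivAt Φ3 (Φ2 x) x)
    (c1 d1 η1 : ℝ) (hη1 : 0 < η1) (hc1d1 : c1 < d1)
    (hΔ : ∀ t ∈ Ioo c1 d1, ∀ η ∈ Ioo 0 η1,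
      φ (t + 3 * η) - 3 * φ (t + 2 * η) + 3 * φ (t + η) - φ t = 0) :
    ∃ c d : ℝ, c < d ∧ ∃ a b e : ℝ,
      ∀ t ∈ Ioo c d, φ t = a * t ^ 2 + b * t + e := by
  set eh := η1 / 4 with hehd
  have heh : 0 < eh := by simp [hehd]; linarith
  -- the (IV) identity
  have hIV : ∀ t ∈ Ioo c1 d1, ∀ e ∈ Ioo 0 η1,
      combM Φ3 [((1:ℝ)/27,3),(-3/8,2),(3,1),(-575/216,0)] t e
        = e^3*(φ t/6) + e^2*(11/12*Φ1 t) + e*(85/36*Φ2 t) := by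
    intro t ht
    -- (II)
    have hII : ∀ b ∈ Ioo 0 η1,
        combM Φ1 [((1:ℝ)/3,3),(-3/2,2),(3,1),(-11/6,0)] t b - b * φ t = 0 := by
      have hD : ∀ b : ℝ, HasDerivAt
          (fun b => combM Φ1 [((1:ℝ)/3,3),(-3/2,2),(3,1),(-11/6,0)] t b - b * φ t)
          (combM φ ([((1:ℝ)/3,3),(-3/2,2),(3,1),(-11/6,0)].map fun p => (p.1*p.2,p.2)) t b - φ t) b :=
        fun b => (combM_hasDerivAt hΦ1 _ t b).sub (hasDerivAt_mul_const (φ t))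
      have hz : ∀ u ∈ Ico 0 η1,
          combM φ ([((1:ℝ)/3,3),(-3/2,2),(3,1),(-11/6,0)].map fun p => (p.1*p.2,p.2)) t u - φ t = 0 := by
        intro u hu
        rcases eq_or_lt_of_le hu.1 with h0 | h0
        · simp only [combM, List.map_cons, List.map_nil, List.sum_cons, List.sum_nil, ← h0]
          ring
        · have hd := hΔ t ht u ⟨h0, hu.2⟩
          simp only [combM, List.map_cons, List.map_nil, List.sum_cons, List.sum_nil]
          linear_combination (norm := ring_nf) hd
      have hcst := const_on_Ico hD hz
      intro b hb
      rw [hcst b hb]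
      simp only [combM, List.map_cons, List.map_nil, List.sum_cons, List.sum_nil]
      ring
    -- (III)
    have hIII : ∀ c ∈ Ioo 0 η1,
        combM Φ2 [((1:ℝ)/9,3),(-3/4,2),(3,1),(-85/36,0)] t c
          - (c^2*(φ t/2) + c*(11/6*Φ1 t)) = 0 := by
      have hD : ∀ c : ℝ, HasDerivAt
          (fun c => combM Φ2 [((1:ℝ)/9,3),(-3/4,2),(3,1),(-85/36,0)] t c
            - (c^2*(φ t/2) + c*(11/6*Φ1 t)))
          (combM Φ1 ([((1:ℝ)/9,3),(-3/4,2),(3,1),(-85/36,0)].map fun p => (p.1*p.2,p.2)) t c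
            - ((2:ℕ)*c^1*(φ t/2) + 11/6*Φ1 t)) c := by
        intro c
        exact (combM_hasDerivAt hΦ2 _ t c).sub
          (((hasDerivAt_pow 2 c).mul_const (φ t/2)).add (hasDerivAt_mul_const (11/6*Φ1 t)))
      have hz : ∀ u ∈ Ico 0 η1,
          combM Φ1 ([((1:ℝ)/9,3),(-3/4,2),(3,1),(-85/36,0)].map fun p => (p.1*p.2,p.2)) t u
            - ((2:ℕ)*u^1*(φ t/2) + 11/6*Φ1 t) = 0 := by
        intro u hu
        rcases eq_or_lt_of_le hu.1 with h0 | h0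
        · simp only [combM, List.map_cons, List.map_nil, List.sum_cons, List.sum_nil, ← h0]
          push_cast
          ring
        · have hd := hII u ⟨h0, hu.2⟩
          simp only [combM, List.map_cons, List.map_nil, List.sum_cons, List.sum_nil] at hd ⊢
          push_cast
          linear_combination (norm := ring_nf) hd
      have hcst := const_on_Ico hD hz
      intro c hc
      rw [hcst c hc]
      simp only [combM, List.map_cons, List.map_nil, List.sum_cons, List.sum_nil]
      ring
    -- (IV)
    have hD : ∀ e : ℝ, HasDerivAt
        (fun e => combM Φ3 [((1:ℝ)/27,3),(-3/8,2),(3,1),(-575/216,0)] t e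
          - (e^3*(φ t/6) + e^2*(11/12*Φ1 t) + e*(85/36*Φ2 t)))
        (combM Φ2 ([((1:ℝ)/27,3),(-3/8,2),(3,1),(-575/216,0)].map fun p => (p.1*p.2,p.2)) t e
          - ((3:ℕ)*e^2*(φ t/6) + (2:ℕ)*e^1*(11/12*Φ1 t) + 85/36*Φ2 t)) e := by
      intro e
      exact (combM_hasDerivAt hΦ3 _ t e).sub
        ((((hasDerivAt_pow 3 e).mul_const (φ t/6)).add
          ((hasDerivAt_pow 2 e).mul_const (11/12*Φ1 t))).add
          (hasDerivAt_mul_const (85/36*Φ2 t)))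
    have hz : ∀ u ∈ Ico 0 η1,
        combM Φ2 ([((1:ℝ)/27,3),(-3/8,2),(3,1),(-575/216,0)].map fun p => (p.1*p.2,p.2)) t u
          - ((3:ℕ)*u^2*(φ t/6) + (2:ℕ)*u^1*(11/12*Φ1 t) + 85/36*Φ2 t) = 0 := by
      intro u hu
      rcases eq_or_lt_of_le hu.1 with h0 | h0
      · simp only [combM, List.map_cons, List.map_nil, List.sum_cons, List.sum_nil, ← h0]
        push_cast
        ring
      · have hd := hIII u ⟨h0, hu.2⟩
        simp only [combM, List.map_cons, List.map_nil, List.sum_cons, List.sum_nil] at hd ⊢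
        push_cast
        linear_combination (norm := ring_nf) hd
    have hcst := const_on_Ico hD hz
    intro e he
    have := hcst e he
    simp only [combM, List.map_cons, List.map_nil, List.sum_cons, List.sum_nil] at this ⊢
    linear_combination (norm := ring_nf) this
  -- eliminate Φ1 t, Φ2 t using e, 2e, 3e
  have hφg : ∀ t ∈ Ioo c1 d1, eh^3 * φ t =
      comb Φ3 [((1:ℝ)/9, 3*eh), (-9/8, 2*eh), (9, eh), (-3*(575/216), 0),
               (-1/9, 6*eh), (9/8, 4*eh), (-9, 2*eh), (3*(575/216), 0),
               (1/27, 9*eh), (-3/8, 6*eh), (3, 3*eh), (-(575/216), 0)] t := by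
    intro t ht
    have IV1 := hIV t ht eh ⟨heh, by rw [hehd]; linarith⟩
    have IV2 := hIV t ht (2*eh) ⟨by linarith, by rw [hehd]; linarith⟩
    have IV3 := hIV t ht (3*eh) ⟨by linarith, by rw [hehd]; linarith⟩
    simp only [comb, combM, List.map_cons, List.map_nil, List.sum_cons, List.sum_nil]
      at IV1 IV2 IV3 ⊢
    linear_combination (norm := ring_nf) -3*IV1 + 3*IV2 - IV3
  -- final interval
  set c2 := c1 with hc2d
  set d2 := c1 + (d1 - c1)/2 with hd2d
  have hc2d2 : c2 < d2 := by rw [hc2d, hd2d]; linarith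
  set η2 := min η1 ((d1 - c1)/6) with hη2d
  have hη2 : 0 < η2 := lt_min hη1 (by linarith)
  -- third differences of the smooth representative vanish
  have hΔG : ∀ t ∈ Ioo c2 d2, ∀ η ∈ Ioo 0 η2,
      combM (comb Φ3 [((1:ℝ)/9, 3*eh), (-9/8, 2*eh), (9, eh), (-3*(575/216), 0),
               (-1/9, 6*eh), (9/8, 4*eh), (-9, 2*eh), (3*(575/216), 0),
               (1/27, 9*eh), (-3/8, 6*eh), (3, 3*eh), (-(575/216), 0)])
        [((1:ℝ),3),(-3,2),(3,1),(-1,0)] t η = 0 := by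
    intro t ht η hη
    have hη6 : η < (d1 - c1)/6 := lt_of_lt_of_le hη.2 (min_le_right _ _)
    have hηη1 : η < η1 := lt_of_lt_of_le hη.2 (min_le_left _ _)
    have htm : t ∈ Ioo c1 d1 := ⟨ht.1, by have := ht.2; rw [hd2d] at this; linarith⟩
    have hd := hΔ t htm η ⟨hη.1, hηη1⟩
    have e0 := hφg t htm
    have e1 := hφg (t + η) ⟨by have := ht.1; rw [hc2d] at this ⊢; linarith [hη.1], by
      have := ht.2; rw [hd2d] at this; linarith⟩
    have e2 := hφg (t + 2*η) ⟨by have := ht.1; rw [hc2d] at this ⊢; linarith [hη.1], by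
      have := ht.2; rw [hd2d] at this; linarith⟩
    have e3 := hφg (t + 3*η) ⟨by have := ht.1; rw [hc2d] at this ⊢; linarith [hη.1], by
      have := ht.2; rw [hd2d] at this; linarith⟩
    simp only [comb, combM, List.map_cons, List.map_nil, List.sum_cons, List.sum_nil]
      at e0 e1 e2 e3 ⊢
    linear_combination (norm := ring_nf) -e3 + 3*e2 - 3*e1 + e0 + eh^3*hd
  -- deduce that the third derivative of the smooth representative vanishes
  have hz3 : ∀ t ∈ Ioo c2 d2,
      comb φ [((1:ℝ)/9, 3*eh), (-9/8, 2*eh), (9, eh), (-3*(575/216), 0),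
               (-1/9, 6*eh), (9/8, 4*eh), (-9, 2*eh), (3*(575/216), 0),
               (1/27, 9*eh), (-3/8, 6*eh), (3, 3*eh), (-(575/216), 0)] t = 0 := by
    intro t ht
    have hG1 := deriv_zero_on (fun η =>
      combM_hasDerivAt (comb_hasDerivAt hΦ3 _) [((1:ℝ),3),(-3,2),(3,1),(-1,0)] t η)
      (hΔG t ht)
    have hG2 := deriv_zero_on (fun η =>
      combM_hasDerivAt (comb_hasDerivAt hΦ2 _)
        ([((1:ℝ),3),(-3,2),(3,1),(-1,0)].map fun p => (p.1*p.2, p.2)) t η) hG1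
    have hG3 := deriv_zero_on (fun η =>
      combM_hasDerivAt (comb_hasDerivAt hΦ1 _)
        (([((1:ℝ),3),(-3,2),(3,1),(-1,0)].map (fun p => (p.1*p.2, p.2))).map
          (fun p => (p.1*p.2, p.2))) t η) hG2
    have h00 := zero_at_zero
      (combM_continuous (comb_continuous hφ _) _ t) hη2 hG3
    simp only [comb, combM, List.map_cons, List.map_nil, List.sum_cons, List.sum_nil]
      at h00 ⊢
    linear_combination (norm := ring_nf) h00 / 6
  obtain ⟨a, b, e, hq⟩ := quad_of_deriv3_zero
    (comb Φ3 [((1:ℝ)/9, 3*eh), (-9/8, 2*eh), (9, eh), (-3*(575/216), 0),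
               (-1/9, 6*eh), (9/8, 4*eh), (-9, 2*eh), (3*(575/216), 0),
               (1/27, 9*eh), (-3/8, 6*eh), (3, 3*eh), (-(575/216), 0)])
    (comb Φ2 _) (comb Φ1 _) (comb φ _)
    (comb_hasDerivAt hΦ3 _) (comb_hasDerivAt hΦ2 _) (comb_hasDerivAt hΦ1 _)
    hc2d2 hz3
  refine ⟨c2, d2, hc2d2, a/eh^3, b/eh^3, e/eh^3, fun t ht => ?_⟩
  have h1 := hφg t ⟨ht.1, by have := ht.2; rw [hd2d] at this; rw [hc2d] at *; linarith⟩
  have h2 := hq t ht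
  rw [h2] at h1
  have heh3 : eh^3 ≠ 0 := by positivity
  field_simp
  linarith

/-- antiderivative of a continuous function -/
noncomputable def anti (f : ℝ → ℝ) : ℝ → ℝ := fun t => ∫ τ in (0:ℝ)..t, f τ

lemma anti_hasDerivAt {f : ℝ → ℝ} (hf : Continuous f) (t : ℝ) :
    HasDerivAt (anti f) (f t) t :=
  intervalIntegral.integral_hasDerivAt_right (hf.intervalIntegrable 0 t)
    hf.aestronglyMeasurable.stronglyMeasurableAtFilter hf.continuousAt

lemma anti_continuous {f : ℝ → ℝ} (hf : Continuous f) : Continuous (anti f) :=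
  Differentiable.continuous (fun t => (anti_hasDerivAt hf t).differentiableAt)

lemma extract_id (φ : ℝ → ℝ) (v0 v1 v2 v3 s K0 K1 K2 K3 x y ε : ℝ)
    (h0 : v0 * φ (x + K0 * y) + v1 * φ (x + K1 * y) + v2 * φ (x + K2 * y) + v3 * φ (x + K3 * y) = s)
    (h1 : v0 * φ (x - K1 * ε + K0 * (y + ε)) + v1 * φ (x - K1 * ε + K1 * (y + ε))
        + v2 * φ (x - K1 * ε + K2 * (y + ε)) + v3 * φ (x - K1 * ε + K3 * (y + ε)) = s)
    (h2 : v0 * φ (x - K2 * ε + K0 * (y + ε)) + v1 * φ (x - K2 * ε + K1 * (y + ε))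
        + v2 * φ (x - K2 * ε + K2 * (y + ε)) + v3 * φ (x - K2 * ε + K3 * (y + ε)) = s)
    (h3 : v0 * φ (x - K3 * ε + K0 * (y + ε)) + v1 * φ (x - K3 * ε + K1 * (y + ε))
        + v2 * φ (x - K3 * ε + K2 * (y + ε)) + v3 * φ (x - K3 * ε + K3 * (y + ε)) = s)
    (h12 : v0 * φ (x - (K1 + K2) * ε + K0 * (y + 2 * ε)) + v1 * φ (x - (K1 + K2) * ε + K1 * (y + 2 * ε))
        + v2 * φ (x - (K1 + K2) * ε + K2 * (y + 2 * ε)) + v3 * φ (x - (K1 + K2) * ε + K3 * (y + 2 * ε)) = s)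
    (h13 : v0 * φ (x - (K1 + K3) * ε + K0 * (y + 2 * ε)) + v1 * φ (x - (K1 + K3) * ε + K1 * (y + 2 * ε))
        + v2 * φ (x - (K1 + K3) * ε + K2 * (y + 2 * ε)) + v3 * φ (x - (K1 + K3) * ε + K3 * (y + 2 * ε)) = s)
    (h23 : v0 * φ (x - (K2 + K3) * ε + K0 * (y + 2 * ε)) + v1 * φ (x - (K2 + K3) * ε + K1 * (y + 2 * ε))
        + v2 * φ (x - (K2 + K3) * ε + K2 * (y + 2 * ε)) + v3 * φ (x - (K2 + K3) * ε + K3 * (y + 2 * ε)) = s)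
    (h123 : v0 * φ (x - (K1 + K2 + K3) * ε + K0 * (y + 3 * ε)) + v1 * φ (x - (K1 + K2 + K3) * ε + K1 * (y + 3 * ε))
        + v2 * φ (x - (K1 + K2 + K3) * ε + K2 * (y + 3 * ε)) + v3 * φ (x - (K1 + K2 + K3) * ε + K3 * (y + 3 * ε)) = s) :
    v0 * (φ (x + K0 * y)
      - φ (x + K0 * y + (K0 - K1) * ε) - φ (x + K0 * y + (K0 - K2) * ε) - φ (x + K0 * y + (K0 - K3) * ε)
      + φ (x + K0 * y + ((K0 - K1) + (K0 - K2)) * ε) + φ (x + K0 * y + ((K0 - K1) + (K0 - K3)) * ε)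
      + φ (x + K0 * y + ((K0 - K2) + (K0 - K3)) * ε)
      - φ (x + K0 * y + ((K0 - K1) + (K0 - K2) + (K0 - K3)) * ε)) = 0 := by
  ring_nf at h0 h1 h2 h3 h12 h13 h23 h123 ⊢
  linear_combination h0 - h1 - h2 - h3 + h12 + h13 + h23 - h123

theorem smoothing_step (φ : ℝ → ℝ) (hφ : Continuous φ)
    (k : Fin 4 → ℤ) (hk : Function.Injective k)
    (v : Fin 4 → ℝ) (hv : v 0 ≠ 0) (s : ℝ)
    (aI bI aJ bJ : ℝ) (hI : aI < bI) (hJ : aJ < bJ)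
    (heq : ∀ x ∈ Set.Ioo aI bI, ∀ y ∈ Set.Ioo aJ bJ,
      (∑ j : Fin 4, v j * φ (x + (k j : ℝ) * y)) = s) :
    ∃ c d : ℝ, c < d ∧ ∃ a b e : ℝ,
      ∀ t ∈ Set.Ioo c d, φ t = a * t ^ 2 + b * t + e := by
  set K0 := ((k 0 : ℤ) : ℝ) with hK0
  set K1 := ((k 1 : ℤ) : ℝ) with hK1
  set K2 := ((k 2 : ℤ) : ℝ) with hK2
  set K3 := ((k 3 : ℤ) : ℝ) with hK3
  have hne : ∀ j : Fin 4, j ≠ 0 → ((k 0 : ℝ)) ≠ ((k j : ℝ)) := by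
    intro j hj h
    exact hj (hk (by exact_mod_cast h)).symm
  have hm1 : K0 - K1 ≠ 0 := sub_ne_zero.mpr (hne 1 (by decide))
  have hm2 : K0 - K2 ≠ 0 := sub_ne_zero.mpr (hne 2 (by decide))
  have hm3 : K0 - K3 ≠ 0 := sub_ne_zero.mpr (hne 3 (by decide))
  set x0 := (aI + bI) / 2 with hx0
  set y0 := (aJ + bJ) / 2 with hy0
  set rI := (bI - aI) / 2 with hrI
  set rJ := (bJ - aJ) / 2 with hrJ
  have hrIp : 0 < rI := by rw [hrI]; linarith
  have hrJp : 0 < rJ := by rw [hrJ]; linarith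
  set A := |K1| + |K2| + |K3| with hA
  have hA0 : 0 ≤ A := by rw [hA]; positivity
  set ε0 := min (rI / (2 * (A + 1))) (rJ / 4) with hε0d
  have hε0 : 0 < ε0 := lt_min (by positivity) (by positivity)
  set c0 := x0 + K0 * y0 - rI / 2 with hc0
  set d0 := x0 + K0 * y0 + rI / 2 with hd0
  have hc0d0 : c0 < d0 := by rw [hc0, hd0]; linarith
  -- antiderivatives
  set Φ1 := anti φ with hΦ1d
  set Φ2 := anti Φ1 with hΦ2d
  set Φ3 := anti Φ2 with hΦ3d
  have hΦ1 : ∀ x, HasDerivAt Φ1 (φ x) x := anti_hasDerivAt hφ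
  have hΦ1c : Continuous Φ1 := anti_continuous hφ
  have hΦ2 : ∀ x, HasDerivAt Φ2 (Φ1 x) x := anti_hasDerivAt hΦ1c
  have hΦ2c : Continuous Φ2 := anti_continuous hΦ1c
  have hΦ3 : ∀ x, HasDerivAt Φ3 (Φ2 x) x := anti_hasDerivAt hΦ2c
  clear_value Φ3 Φ2 Φ1 d0 c0 ε0 A rJ rI y0 x0 K3 K2 K1 K0
  -- the mixed-difference identity
  have Hid : ∀ t ∈ Ioo c0 d0, ∀ ε ∈ Ioo 0 ε0,
      φ t - φ (t + (K0 - K1) * ε) - φ (t + (K0 - K2) * ε) - φ (t + (K0 - K3) * ε)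
        + φ (t + ((K0 - K1) + (K0 - K2)) * ε) + φ (t + ((K0 - K1) + (K0 - K3)) * ε)
        + φ (t + ((K0 - K2) + (K0 - K3)) * ε)
        - φ (t + ((K0 - K1) + (K0 - K2) + (K0 - K3)) * ε) = 0 := by
    intro t ht ε hε
    set x := t - K0 * y0 with hxd
    clear_value x
    have hεI : ε * (2 * (A + 1)) < rI := by
      have h1 : ε < rI / (2 * (A + 1)) := by
        have h2' := hε.2
        rw [hε0d] at h2'
        exact lt_of_lt_of_le h2' (min_le_left _ _)
      have h2 : (0:ℝ) < 2 * (A + 1) := by linarith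
      calc ε * (2 * (A + 1)) < rI / (2 * (A + 1)) * (2 * (A + 1)) := by
            exact mul_lt_mul_of_pos_right h1 h2
        _ = rI := by field_simp
    have hεJ : ε < rJ / 4 := by
      have h2' := hε.2
      rw [hε0d] at h2'
      exact lt_of_lt_of_le h2' (min_le_right _ _)
    have hxb : x0 - rI / 2 < x ∧ x < x0 + rI / 2 := by
      constructor
      · rw [hxd]; have := ht.1; rw [hc0] at this; linarith
      · rw [hxd]; have := ht.2; rw [hd0] at this; linarith
    have haIbI : aI = x0 - rI ∧ bI = x0 + rI := by
      constructor <;> (rw [hx0, hrI]; ring)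
    have haJbJ : aJ = y0 - rJ ∧ bJ = y0 + rJ := by
      constructor <;> (rw [hy0, hrJ]; ring)
    have hxm : ∀ σ : ℝ, |σ| ≤ A → x - σ * ε ∈ Ioo aI bI := by
      intro σ hσ
      have h1 : σ ≤ A := le_trans (le_abs_self σ) hσ
      have h2 : -A ≤ σ := by have := neg_abs_le σ; linarith
      have h3 : σ * ε ≤ A * ε := mul_le_mul_of_nonneg_right h1 hε.1.le
      have h4 : -(A * ε) ≤ σ * ε := by nlinarith [hε.1.le]
      have h5 : A * ε < rI / 2 := by nlinarith [hε.1]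
      constructor
      · rw [haIbI.1]; linarith [hxb.1]
      · rw [haIbI.2]; linarith [hxb.2]
    have hym : ∀ j : ℝ, 0 ≤ j → j ≤ 3 → y0 + j * ε ∈ Ioo aJ bJ := by
      intro j hj0 hj3
      have h1 : j * ε ≤ 3 * ε := mul_le_mul_of_nonneg_right hj3 hε.1.le
      have h2 : 0 ≤ j * ε := mul_nonneg hj0 hε.1.le
      constructor
      · rw [haJbJ.1]; linarith
      · rw [haJbJ.2]; linarith
    -- |σ| bounds
    have habs1 : |K1| ≤ A := by rw [hA]; have := abs_nonneg K2; have := abs_nonneg K3; linarith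
    have habs2 : |K2| ≤ A := by rw [hA]; have := abs_nonneg K1; have := abs_nonneg K3; linarith
    have habs3 : |K3| ≤ A := by rw [hA]; have := abs_nonneg K1; have := abs_nonneg K2; linarith
    have habs12 : |K1 + K2| ≤ A := by
      refine le_trans (abs_add_le _ _) ?_
      rw [hA]; have := abs_nonneg K3; linarith
    have habs13 : |K1 + K3| ≤ A := by
      refine le_trans (abs_add_le _ _) ?_
      rw [hA]; have := abs_nonneg K2; linarith
    have habs23 : |K2 + K3| ≤ A := by
      refine le_trans (abs_add_le _ _) ?_
      rw [hA]; have := abs_nonneg K1; linarith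
    have habs123 : |K1 + K2 + K3| ≤ A := by
      refine le_trans (abs_add_le _ _) ?_
      have h12 : |K1 + K2| ≤ |K1| + |K2| := abs_add_le _ _
      rw [hA]; linarith
    -- memberships
    have hx00 : x ∈ Ioo aI bI := by
      have := hxm 0 (by simpa using hA0)
      simpa using this
    have hy00 : y0 ∈ Ioo aJ bJ := by
      have := hym 0 le_rfl (by norm_num)
      simpa using this
    have hy01 : y0 + ε ∈ Ioo aJ bJ := by
      have := hym 1 (by norm_num) (by norm_num)
      simpa using this
    have hy02 : y0 + 2 * ε ∈ Ioo aJ bJ := hym 2 (by norm_num) (by norm_num)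
    have hy03 : y0 + 3 * ε ∈ Ioo aJ bJ := hym 3 (by norm_num) (by norm_num)
    -- the eight instances
    have h0 := heq x hx00 y0 hy00
    have h1 := heq (x - K1 * ε) (hxm K1 habs1) (y0 + ε) hy01
    have h2 := heq (x - K2 * ε) (hxm K2 habs2) (y0 + ε) hy01
    have h3 := heq (x - K3 * ε) (hxm K3 habs3) (y0 + ε) hy01
    have h12 := heq (x - (K1 + K2) * ε) (hxm (K1 + K2) habs12) (y0 + 2 * ε) hy02
    have h13 := heq (x - (K1 + K3) * ε) (hxm (K1 + K3) habs13) (y0 + 2 * ε) hy02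
    have h23 := heq (x - (K2 + K3) * ε) (hxm (K2 + K3) habs23) (y0 + 2 * ε) hy02
    have h123 := heq (x - (K1 + K2 + K3) * ε) (hxm (K1 + K2 + K3) habs123) (y0 + 3 * ε) hy03
    rw [Fin.sum_univ_four] at h0 h1 h2 h3 h12 h13 h23 h123
    rw [← hK0, ← hK1, ← hK2, ← hK3] at h0 h1 h2 h3 h12 h13 h23 h123
    have hbig := extract_id φ (v 0) (v 1) (v 2) (v 3) s K0 K1 K2 K3 x y0 ε
      h0 h1 h2 h3 h12 h13 h23 h123
    have hxt : x + K0 * y0 = t := by rw [hxd]; ring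
    rw [hxt] at hbig
    rcases mul_eq_zero.mp hbig with h | h
    · exact absurd h hv
    · exact h
  -- stage 1
  have hΔ' := stage1 φ Φ1 Φ2 Φ3 hφ hΦ1 hΦ2 hΦ3 (K0 - K1) (K0 - K2) (K0 - K3)
    (by exact mul_ne_zero (mul_ne_zero hm1 hm2) hm3) c0 d0 ε0 hε0 hc0d0 Hid
  -- stage 2
  have hΔ : ∀ t ∈ Ioo c0 (c0 + rI / 2), ∀ η ∈ Ioo 0 (rI / 6),
      φ (t + 3 * η) - 3 * φ (t + 2 * η) + 3 * φ (t + η) - φ t = 0 := by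
    intro t ht η hη
    refine hΔ' t η hη.1 ⟨ht.1, ?_⟩ ?_
    · rw [hd0]; have := ht.2; rw [hc0] at *; linarith [hη.1]
    · rw [hd0]; have h2 := ht.2; have h3 := hη.2; rw [hc0] at *; linarith
  exact stage2 φ Φ1 Φ2 Φ3 hφ hΦ1 hΦ2 hΦ3 c0 (c0 + rI / 2) (rI / 6)
    (by linarith) (by linarith) hΔ
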